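/- Let G be a finite connected multigraph, H a refinement of G, T a tree, and φ: H → T a finite harmonic morphism of degree sgon(G). Let v' ∈ V(T) be a leaf of T such that every vertex v ∈ V(H) with φ(v) = v' is an external added vertex of H, and let T' = T \ {v'}. Then there exist a refinement H' of G and a finite harmonic morphism φ': H' → T' with deg(φ') ≤ deg(φ); moreover H' can be taken to be H with all vertices mapped to v' removed (taking the connected component containing G), and φ' the restriction of φ. -/

import Mathlib

/-- A finite multigraph: finite vertex and edge types, where each edge carries an
unordered pair of endpoints (loops and parallel edges are allowed). -/
structure Multigraph where
  V : Type
  E : Type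
  fintypeV : Fintype V
  fintypeE : Fintype E
  nonemptyV : Nonempty V
  ends : E → Sym2 V

attribute [instance] Multigraph.fintypeV Multigraph.fintypeE Multigraph.nonemptyV

namespace Multigraph

/-- Walks in a multigraph, recorded as sequences of edges with compatible endpoints. -/
inductive Walk (M : Multigraph) : M.V → M.V → Type where
  | nil (v : M.V) : Walk M v v
  | cons {u v w : M.V} (e : M.E) (he : M.ends e = s(u, v)) (p : Walk M v w) : Walk M u w

namespace Walk

/-- The list of edges of a walk. -/
def edges {M : Multigraph} : {a b : M.V} → M.Walk a b → List M.E
  | _, _, .nil _ => []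
  | _, _, .cons e _ p => e :: p.edges

/-- The list of vertices visited by a walk (including both endpoints). -/
def support {M : Multigraph} : {a b : M.V} → M.Walk a b → List M.V
  | a, _, .nil _ => [a]
  | a, _, .cons _ _ p => a :: p.support

end Walk

/-- A multigraph is connected if any two vertices are joined by a walk. -/
def Connected (M : Multigraph) : Prop := ∀ u v : M.V, Nonempty (M.Walk u v)

/-- A multigraph is a tree if it is connected with exactly one more vertex than
edges (equivalently: connected and acyclic; in particular no loops or parallel edges). -/
def IsTree (M : Multigraph) : Prop :=
  M.Connected ∧ Fintype.card M.E + 1 = Fintype.card M.V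

/-- A leaf: a vertex incident with exactly one edge. -/
def IsLeaf (M : Multigraph) (v : M.V) : Prop := ∃! e : M.E, v ∈ M.ends e

/-- The branch `T_a(b)` of a tree `T` at `a` towards `b`: the set of vertices that can be
reached from `b` by a walk avoiding `a` (the component of `T - a` containing `b`). -/
def branch (M : Multigraph) (a b : M.V) : Set M.V :=
  {w | ∃ p : M.Walk b w, a ∉ p.support}

end Multigraph

/-- A finite morphism between multigraphs: vertices map to vertices, edges map to edges
compatibly with endpoints, and every edge carries a positive integer index. -/
structure Morphism (A B : Multigraph) where
  vMap : A.V → B.V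
  eMap : A.E → B.E
  ends_eq : ∀ e : A.E, B.ends (eMap e) = (A.ends e).map vMap
  r : A.E → ℕ
  r_pos : ∀ e : A.E, 0 < r e

namespace Morphism

open Classical in
/-- The sum `∑_{e ∋ v, φ(e) = e'} r_φ(e)`. -/
noncomputable def localDeg {A B : Multigraph} (φ : Morphism A B) (v : A.V) (e' : B.E) : ℕ :=
  ∑ e : A.E, if v ∈ A.ends e ∧ φ.eMap e = e' then φ.r e else 0

/-- A morphism is harmonic if, for every vertex `v`, the local sum
`∑_{e ∋ v, φ(e) = e'} r_φ(e)` does not depend on the choice of the edge `e'`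
incident with `φ(v)`. -/
def Harmonic {A B : Multigraph} (φ : Morphism A B) : Prop :=
  ∀ (v : A.V) (e₁ e₂ : B.E), φ.vMap v ∈ B.ends e₁ → φ.vMap v ∈ B.ends e₂ →
    φ.localDeg v e₁ = φ.localDeg v e₂

open Classical in
/-- The sum `∑_{e, φ(e) = e'} r_φ(e)`. -/
noncomputable def degreeOn {A B : Multigraph} (φ : Morphism A B) (e' : B.E) : ℕ :=
  ∑ e : A.E, if φ.eMap e = e' then φ.r e else 0

/-- `φ` has degree `d` if `∑_{e, φ(e) = e'} r_φ(e) = d` for every edge `e'` of the target. -/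
def HasDegree {A B : Multigraph} (φ : Morphism A B) (d : ℕ) : Prop :=
  ∀ e' : B.E, φ.degreeOn e' = d

end Morphism

/-- A refinement of `G`: a (connected) multigraph `H` obtained from `G` by subdividing each
edge of `G` into a path and attaching finitely many trees to vertices.  The subdivision path
of the edge `e` is recorded by `subWalk`, and the vertices of the attached trees are the
external added vertices, recorded by `isExternal`. -/
structure Refinement (G : Multigraph) where
  H : Multigraph
  connH : H.Connected
  vMap : G.V → H.V
  vMap_inj : Function.Injective vMap
  /-- each edge of `H` lies on the subdivision path of (at most) one edge of `G`;
  edges of the attached trees get `none`. -/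
  edgeOrigin : H.E → Option G.E
  /-- the external added vertices: vertices of the attached trees. -/
  isExternal : H.V → Prop
  external_not_orig : ∀ v : G.V, ¬ isExternal (vMap v)
  /-- the subdivision path `R_e` replacing the edge `e = uv` of `G`. -/
  subWalk : ∀ (e : G.E) (u v : G.V), G.ends e = s(u, v) → H.Walk (vMap u) (vMap v)
  subWalk_edges_nodup : ∀ e u v he, (subWalk e u v he).edges.Nodup
  subWalk_edges_origin : ∀ e u v he (f : H.E),
      f ∈ (subWalk e u v he).edges ↔ edgeOrigin f = some e
  subWalk_path : ∀ e u v he, u ≠ v → (subWalk e u v he).support.Nodup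
  subWalk_cycle : ∀ e u v he, u = v →
      (subWalk e u v he).support.tail.Nodup ∧ (subWalk e u v he).edges ≠ []
  subWalk_internal : ∀ e u v he (w : H.V), w ∈ (subWalk e u v he).support →
      ¬ isExternal w ∧ (∀ x : G.V, vMap x = w → w = vMap u ∨ w = vMap v)
  subWalk_disjoint : ∀ e₁ u₁ v₁ he₁ e₂ u₂ v₂ he₂ (w : H.V), e₁ ≠ e₂ →
      w ∈ (subWalk e₁ u₁ v₁ he₁).support → w ∈ (subWalk e₂ u₂ v₂ he₂).support →
      ∃ x : G.V, vMap x = w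
  vertex_cases : ∀ w : H.V, (∃ x : G.V, vMap x = w) ∨ isExternal w ∨
      ∃ (e : G.E) (u v : G.V) (he : G.ends e = s(u, v)), w ∈ (subWalk e u v he).support
  external_edge : ∀ f : H.E, edgeOrigin f = none → ∃ w : H.V, w ∈ H.ends f ∧ isExternal w
  external_incident : ∀ (f : H.E) (w : H.V), isExternal w → w ∈ H.ends f →
      edgeOrigin f = none
  added_acyclic : ∀ (x : H.V) (p : H.Walk x x), p.edges.Nodup →
      (∀ f ∈ p.edges, edgeOrigin f = none) → p.edges = []

/-- The attached tree `G_v(u)` hanging at the vertex `v` of `G` and containing the external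
added vertex `u`: all vertices reachable from `u` by walks in the attached trees avoiding `v`. -/
def Refinement.attachedTree {G : Multigraph} (R : Refinement G) (v : G.V) (u : R.H.V) :
    Set R.H.V :=
  {w | ∃ p : R.H.Walk u w, (∀ f ∈ p.edges, R.edgeOrigin f = none) ∧ R.vMap v ∉ p.support}

/-- `sgon(G) = k`: the stable gonality of `G`, i.e. the minimum of the degrees of all finite
harmonic morphisms from a refinement of `G` to a tree, equals `k`. -/
def IsStableGonality (G : Multigraph) (k : ℕ) : Prop :=
  (∃ (R : Refinement G) (T : Multigraph) (φ : Morphism R.H T),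
      T.IsTree ∧ φ.Harmonic ∧ φ.HasDegree k) ∧
  ∀ k' : ℕ, (∃ (R : Refinement G) (T : Multigraph) (φ : Morphism R.H T),
      T.IsTree ∧ φ.Harmonic ∧ φ.HasDegree k') → k ≤ k'

namespace Multigraph
namespace Walk
variable {M : Multigraph}

@[simp] lemma support_nil (v : M.V) : (Walk.nil (M := M) v).support = [v] := rfl
@[simp] lemma support_cons {u v w : M.V} (e : M.E) (he : M.ends e = s(u, v)) (p : M.Walk v w) :
    (Walk.cons e he p).support = u :: p.support := rfl
@[simp] lemma edges_nil (v : M.V) : (Walk.nil (M := M) v).edges = [] := rfl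
@[simp] lemma edges_cons {u v w : M.V} (e : M.E) (he : M.ends e = s(u, v)) (p : M.Walk v w) :
    (Walk.cons e he p).edges = e :: p.edges := rfl

lemma start_mem_support : ∀ {a b : M.V} (p : M.Walk a b), a ∈ p.support
  | _, _, .nil _ => List.mem_singleton.2 rfl
  | _, _, .cons _ _ _ => List.mem_cons_self

lemma end_mem_support : ∀ {a b : M.V} (p : M.Walk a b), b ∈ p.support
  | _, _, .nil _ => List.mem_singleton.2 rfl
  | _, _, .cons _ _ p => List.mem_cons_of_mem _ (end_mem_support p)

def append : ∀ {a b c : M.V}, M.Walk a b → M.Walk b c → M.Walk a c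
  | _, _, _, .nil _, q => q
  | _, _, _, .cons e he p, q => .cons e he (p.append q)

lemma mem_support_append {x : M.V} : ∀ {a b c : M.V} (p : M.Walk a b) (q : M.Walk b c),
    x ∈ (p.append q).support ↔ x ∈ p.support ∨ x ∈ q.support
  | _, _, _, .nil a, q => by
      simp [append, support]
      intro h; subst h; exact q.start_mem_support
  | _, _, _, .cons e he p, q => by
      simp [append, support, mem_support_append p q, or_assoc]

lemma edges_append : ∀ {a b c : M.V} (p : M.Walk a b) (q : M.Walk b c),
    (p.append q).edges = p.edges ++ q.edges
  | _, _, _, .nil _, q => rfl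
  | _, _, _, .cons e he p, q => by simp [append, edges, edges_append p q]

def reverse : ∀ {a b : M.V}, M.Walk a b → M.Walk b a
  | _, _, .nil a => .nil a
  | _, _, .cons e he p => p.reverse.append (.cons e (he.trans Sym2.eq_swap) (.nil _))

lemma mem_support_reverse {x : M.V} : ∀ {a b : M.V} (p : M.Walk a b),
    x ∈ p.reverse.support ↔ x ∈ p.support
  | _, _, .nil a => Iff.rfl
  | _, _, .cons (v := v) e he p => by
      simp [reverse, mem_support_append, mem_support_reverse p, support]
      constructor
      · rintro (h | h | h)
        · exact Or.inr h
        · exact Or.inr (h ▸ p.start_mem_support)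
        · exact Or.inl h
      · rintro (h | h)
        · exact Or.inr (Or.inr h)
        · exact Or.inl h

end Walk
end Multigraph

namespace Multigraph

section NoLoop

open Classical in
private noncomputable def wdist (M : Multigraph) (hconn : M.Connected) (root v : M.V) : ℕ :=
  Nat.find (p := fun n => ∃ p : M.Walk v root, p.edges.length = n)
    ⟨_, (hconn v root).some, rfl⟩

private lemma wdist_le (M : Multigraph) (hconn : M.Connected) (root v : M.V)
    (p : M.Walk v root) : M.wdist hconn root v ≤ p.edges.length := by
  classical
  exact Nat.find_min' _ ⟨p, rfl⟩

private lemma wdist_spec (M : Multigraph) (hconn : M.Connected) (root v : M.V) :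
    ∃ p : M.Walk v root, p.edges.length = M.wdist hconn root v := by
  classical
  exact Nat.find_spec (p := fun n => ∃ p : M.Walk v root, p.edges.length = n)
    ⟨_, (hconn v root).some, rfl⟩

private lemma exists_step (M : Multigraph) (hconn : M.Connected) (root : M.V)
    (v : M.V) (hv : v ≠ root) :
    ∃ (e : M.E) (x : M.V), M.ends e = s(v, x) ∧
      M.wdist hconn root x < M.wdist hconn root v := by
  obtain ⟨p, hp⟩ := M.wdist_spec hconn root v
  cases p with
  | nil _ => exact absurd rfl hv
  | cons e he q =>
      refine ⟨e, _, he, ?_⟩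
      have h1 := M.wdist_le hconn root _ q
      simp [Walk.edges] at hp
      omega

/-- A tree (connected, `|E| + 1 = |V|`) has no loops. -/
lemma IsTree.no_loop {M : Multigraph} (hT : M.IsTree) {e : M.E} {a : M.V}
    (hends : M.ends e = s(a, a)) : False := by
  classical
  obtain ⟨hconn, hcard⟩ := hT
  -- injection from vertices ≠ a to edges ≠ e
  have key : ∀ v : M.V, v ≠ a → ∃ (f : M.E) (x : M.V), M.ends f = s(v, x) ∧
      M.wdist hconn a x < M.wdist hconn a v := fun v hv => M.exists_step hconn a v hv
  choose F X hF hX using key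
  have hFne : ∀ v hv, F v hv ≠ e := by
    intro v hv hEq
    have := hF v hv
    rw [hEq, hends] at this
    rcases Sym2.eq_iff.1 this with ⟨h1, h2⟩ | ⟨h1, h2⟩
    · exact hv h1.symm
    · exact hv h2.symm
  set Fun : {v : M.V // v ≠ a} → {f : M.E // f ≠ e} :=
    fun v => ⟨F v.1 v.2, hFne v.1 v.2⟩ with hFun
  have hinj : Function.Injective Fun := by
    rintro ⟨u, hu⟩ ⟨v, hv⟩ h
    simp only [hFun, Subtype.mk_eq_mk] at h ⊢
    by_contra hne
    have h1 := hF u hu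
    have h2 := hF v hv
    rw [h] at h1
    rw [h1] at h2
    rcases Sym2.eq_iff.1 h2 with ⟨hx, hy⟩ | ⟨hx, hy⟩
    · exact hne hx
    · -- u = X v, X u = v
      have d1 := hX u hu
      have d2 := hX v hv
      rw [hy] at d1
      rw [← hx] at d2
      omega
  have hcard1 : Fintype.card {v : M.V // v ≠ a} = Fintype.card M.V - 1 := by
    rw [Fintype.card_subtype_compl, Fintype.card_subtype_eq]
  have hcard2 : Fintype.card {f : M.E // f ≠ e} = Fintype.card M.E - 1 := by
    rw [Fintype.card_subtype_compl, Fintype.card_subtype_eq]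
  have hle := Fintype.card_le_of_injective Fun hinj
  have hpos : 0 < Fintype.card M.E := Fintype.card_pos_iff.2 ⟨e⟩
  omega

lemma IsTree.ne_of_ends {M : Multigraph} (hT : M.IsTree) {e : M.E} {x y : M.V}
    (h : M.ends e = s(x, y)) : x ≠ y := fun hxy => hT.no_loop (hxy ▸ h)

end NoLoop

end Multigraph
lemma Sym2.exists_eq_mk {α : Type*} (z : Sym2 α) : ∃ x y, z = s(x, y) :=
  Sym2.ind (fun x y => ⟨x, y, rfl⟩) z

namespace Morphism

variable {A B : Multigraph}

/-- Push a walk forward along a morphism. -/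
def walkMap (φ : Morphism A B) : ∀ {a b : A.V}, A.Walk a b → B.Walk (φ.vMap a) (φ.vMap b)
  | _, _, .nil a => .nil _
  | _, _, .cons e he p =>
      .cons (φ.eMap e) (by rw [φ.ends_eq, he, Sym2.map_pair_eq]) (φ.walkMap p)

lemma walkMap_edges (φ : Morphism A B) : ∀ {a b : A.V} (p : A.Walk a b),
    (φ.walkMap p).edges = p.edges.map φ.eMap
  | _, _, .nil _ => rfl
  | _, _, .cons e he p => by simp [walkMap, walkMap_edges φ p]

lemma walkMap_support (φ : Morphism A B) : ∀ {a b : A.V} (p : A.Walk a b),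
    (φ.walkMap p).support = p.support.map φ.vMap
  | _, _, .nil _ => rfl
  | _, _, .cons e he p => by simp [walkMap, walkMap_support φ p]

/-- When `φ.eMap f = a` is a non-loop edge incident with `t`, exactly one endpoint of `f`
maps to `t`. -/
lemma existsUnique_end (φ : Morphism A B) (f : A.E) {a : B.E} {t : B.V}
    (hfa : φ.eMap f = a) (hta : t ∈ B.ends a)
    (hnl : ∀ x y : B.V, B.ends a = s(x, y) → x ≠ y) :
    ∃! w : A.V, w ∈ A.ends f ∧ φ.vMap w = t := by
  obtain ⟨p, q, hf⟩ := Sym2.exists_eq_mk (A.ends f)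
  have hmap : B.ends a = s(φ.vMap p, φ.vMap q) := by
    rw [← hfa, φ.ends_eq, hf, Sym2.map_pair_eq]
  obtain ⟨t₂, ht₂⟩ := Sym2.mem_iff_exists.1 hta
  have htne : t ≠ t₂ := hnl _ _ ht₂
  rw [ht₂] at hmap
  rcases Sym2.eq_iff.1 hmap.symm with ⟨h1, h2⟩ | ⟨h1, h2⟩
  · refine ⟨p, ⟨hf ▸ Sym2.mem_mk_left p q, h1⟩, ?_⟩
    rintro w ⟨hw, hwt⟩
    rw [hf] at hw
    rcases Sym2.mem_iff.1 hw with rfl | rfl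
    · rfl
    · exact absurd (hwt.symm.trans h2) htne
  · refine ⟨q, ⟨hf ▸ Sym2.mem_mk_right p q, h2⟩, ?_⟩
    rintro w ⟨hw, hwt⟩
    rw [hf] at hw
    rcases Sym2.mem_iff.1 hw with rfl | rfl
    · exact absurd (hwt.symm.trans h1) htne
    · rfl

open Classical in
lemma degreeOn_eq_sum_localDeg (φ : Morphism A B) {a : B.E} {t : B.V}
    (hta : t ∈ B.ends a)
    (hnl : ∀ x y : B.V, B.ends a = s(x, y) → x ≠ y) :
    φ.degreeOn a = ∑ w : A.V, if φ.vMap w = t then φ.localDeg w a else 0 := by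
  classical
  simp only [localDeg, degreeOn]
  have key : ∀ w : A.V, (if φ.vMap w = t then
        (∑ f : A.E, if w ∈ A.ends f ∧ φ.eMap f = a then φ.r f else 0) else 0)
      = ∑ f : A.E, if (φ.vMap w = t ∧ w ∈ A.ends f ∧ φ.eMap f = a) then φ.r f else 0 := by
    intro w
    by_cases h : φ.vMap w = t
    · rw [if_pos h]
      exact Finset.sum_congr rfl fun f _ => by simp [h]
    · rw [if_neg h]
      exact (Finset.sum_eq_zero fun f _ => by simp [h]).symm
  rw [Finset.sum_congr rfl fun w _ => key w, Finset.sum_comm]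
  apply Finset.sum_congr rfl
  intro f _
  by_cases hfa : φ.eMap f = a
  · rw [if_pos hfa]
    symm
    obtain ⟨w₀, ⟨hm, ht⟩, huniq⟩ := φ.existsUnique_end f hfa hta hnl
    rw [Finset.sum_eq_single w₀
      (fun w _ hne => by
        rw [if_neg]
        rintro ⟨h1, h2, _⟩
        exact hne (huniq w ⟨h2, h1⟩))
      (fun h => absurd (Finset.mem_univ w₀) h)]
    simp [hm, ht, hfa]
  · rw [if_neg hfa]
    symm
    exact Finset.sum_eq_zero fun w _ => by
      rw [if_neg]; rintro ⟨_, _, h⟩; exact hfa h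

lemma degreeOn_eq_of_mem (φ : Morphism A B) (hφ : φ.Harmonic)
    (hnl : ∀ (e : B.E) (x y : B.V), B.ends e = s(x, y) → x ≠ y)
    {a b : B.E} {t : B.V} (hta : t ∈ B.ends a) (htb : t ∈ B.ends b) :
    φ.degreeOn a = φ.degreeOn b := by
  classical
  rw [φ.degreeOn_eq_sum_localDeg hta (hnl a), φ.degreeOn_eq_sum_localDeg htb (hnl b)]
  apply Finset.sum_congr rfl
  intro w _
  by_cases h : φ.vMap w = t
  · rw [if_pos h, if_pos h, hφ w a b (h ▸ hta) (h ▸ htb)]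
  · rw [if_neg h, if_neg h]

lemma degreeOn_walk (φ : Morphism A B) (hφ : φ.Harmonic)
    (hnl : ∀ (e : B.E) (x y : B.V), B.ends e = s(x, y) → x ≠ y) :
    ∀ {u w : B.V} (p : B.Walk u w) (a b : B.E), u ∈ B.ends a → w ∈ B.ends b →
      φ.degreeOn a = φ.degreeOn b
  | _, _, .nil _, _, _, ha, hb => φ.degreeOn_eq_of_mem hφ hnl ha hb
  | _, _, .cons e he q, a, b, ha, hb =>
      (φ.degreeOn_eq_of_mem hφ hnl ha (he ▸ Sym2.mem_mk_left _ _)).trans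
        (degreeOn_walk φ hφ hnl q e b (he ▸ Sym2.mem_mk_right _ _) hb)

lemma degreeOn_const (φ : Morphism A B) (hφ : φ.Harmonic)
    (hnl : ∀ (e : B.E) (x y : B.V), B.ends e = s(x, y) → x ≠ y)
    (hconn : B.Connected) (a b : B.E) : φ.degreeOn a = φ.degreeOn b := by
  obtain ⟨u, u2, hu⟩ := Sym2.exists_eq_mk (B.ends a)
  obtain ⟨w, w2, hw⟩ := Sym2.exists_eq_mk (B.ends b)
  obtain ⟨p⟩ := hconn u w
  exact φ.degreeOn_walk hφ hnl p a b (hu ▸ Sym2.mem_mk_left u u2)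
    (hw ▸ Sym2.mem_mk_left w w2)

end Morphism
lemma sum_ite_subtype {E : Type*} [Fintype E] (P Q : E → Prop) [instQ : Fintype {f // Q f}]
    (inst : ∀ f, Decidable (P f)) (g : E → ℕ) (h : ∀ f, P f → Q f) :
    ∑ f : {f // Q f}, (@ite ℕ (P f.val) (inst f.val) (g f.val) 0)
      = ∑ f : E, @ite ℕ (P f) (inst f) (g f) 0 := by
  classical
  rw [← Finset.sum_subtype (Finset.univ.filter Q) (by simp)
    (fun f => @ite ℕ (P f) (inst f) (g f) 0)]
  exact Finset.sum_filter_of_ne fun f _ hne => by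
    by_contra hQ
    exact hne (if_neg fun hP => hQ (h f hP))

lemma sum_ite_subtype_le {E : Type*} [Fintype E] (P Q : E → Prop) [instQ : Fintype {f // Q f}]
    (inst : ∀ f, Decidable (P f)) (g : E → ℕ) :
    ∑ f : {f // Q f}, (@ite ℕ (P f.val) (inst f.val) (g f.val) 0)
      ≤ ∑ f : E, @ite ℕ (P f) (inst f) (g f) 0 := by
  classical
  rw [← Finset.sum_subtype (Finset.univ.filter Q) (by simp)
    (fun f => @ite ℕ (P f) (inst f) (g f) 0)]
  exact Finset.sum_le_sum_of_subset (Finset.filter_subset _ _)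

section Main

variable {G : Multigraph} (R : Refinement G) {T : Multigraph} (φ : Morphism R.H T) (v' : T.V)

/-- The vertices of `H` reachable from `G` avoiding the fiber over `v'`. -/
def goodSet : Set R.H.V :=
  {w : R.H.V | ∃ (g : G.V) (p : R.H.Walk (R.vMap g) w), ∀ x ∈ p.support, φ.vMap x ≠ v'}

variable {R φ v'}

lemma goodSet.ne_of_mem {w : R.H.V} (hw : w ∈ goodSet R φ v') : φ.vMap w ≠ v' := by
  obtain ⟨g, p, hp⟩ := hw
  exact hp w p.end_mem_support

lemma goodSet.base_mem (hext : ∀ w : R.H.V, φ.vMap w = v' → R.isExternal w) (g : G.V) :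
    R.vMap g ∈ goodSet R φ v' := by
  refine ⟨g, .nil _, ?_⟩
  intro x hx h
  rw [Multigraph.Walk.support_nil, List.mem_singleton] at hx
  subst hx
  exact R.external_not_orig g (hext _ h)

lemma goodSet.extend {w : R.H.V} (hw : w ∈ goodSet R φ v') (f : R.H.E)
    (hwf : w ∈ R.H.ends f) {x : R.H.V} (hx : x ∈ R.H.ends f)
    (hxv : φ.vMap x ≠ v') : x ∈ goodSet R φ v' := by
  by_cases hxw : x = w
  · exact hxw ▸ hw
  · have hends : R.H.ends f = s(w, x) := (Sym2.mem_and_mem_iff (Ne.symm hxw)).1 ⟨hwf, hx⟩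
    obtain ⟨g, p, hp⟩ := hw
    refine ⟨g, p.append (.cons f hends (.nil x)), ?_⟩
    intro y hy
    rw [Multigraph.Walk.mem_support_append] at hy
    rcases hy with hy | hy
    · exact hp y hy
    · simp only [Multigraph.Walk.support_cons, Multigraph.Walk.support_nil,
        List.mem_cons, List.mem_singleton] at hy
      rcases hy with rfl | rfl | h
      · exact goodSet.ne_of_mem ⟨g, p, hp⟩
      · exact hxv
      · cases h

lemma goodSet.end_mem : ∀ {a b : R.H.V} (p : R.H.Walk a b), a ∈ goodSet R φ v' →
    (∀ x ∈ p.support, φ.vMap x ≠ v') → b ∈ goodSet R φ v'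
  | _, _, .nil _, ha, _ => ha
  | _, _, .cons e he p, ha, hp => by
      have hy : _ ∈ goodSet R φ v' := goodSet.extend ha e (he ▸ Sym2.mem_mk_left _ _)
        (he ▸ Sym2.mem_mk_right _ _)
        (hp _ (by simp [Multigraph.Walk.support_cons, p.start_mem_support]))
      exact goodSet.end_mem p hy fun x hx => hp x (by simp [hx])

/-- The edge predicate for the subgraph `H'`. -/
def goodEdge (R : Refinement G) (φ : Morphism R.H T) (v' : T.V) (f : R.H.E) : Prop :=
  ∀ x ∈ R.H.ends f, x ∈ goodSet R φ v'

variable (R φ v')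

open Classical in
/-- The retraction of `H` onto the vertex set of `H'`. -/
noncomputable def retrH (hext : ∀ w : R.H.V, φ.vMap w = v' → R.isExternal w)
    (w : R.H.V) : {w : R.H.V // w ∈ goodSet R φ v'} :=
  if h : w ∈ goodSet R φ v' then ⟨w, h⟩
  else ⟨R.vMap (Classical.arbitrary G.V), goodSet.base_mem hext _⟩

/-- The subgraph `H'` of `H`. -/
noncomputable def Hgood (hext : ∀ w : R.H.V, φ.vMap w = v' → R.isExternal w) :
    Multigraph where
  V := {w : R.H.V // w ∈ goodSet R φ v'}
  E := {f : R.H.E // goodEdge R φ v' f}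
  fintypeV := Fintype.ofFinite _
  fintypeE := Fintype.ofFinite _
  nonemptyV := ⟨⟨_, goodSet.base_mem hext (Classical.arbitrary G.V)⟩⟩
  ends := fun f => (R.H.ends f.val).map (retrH R φ v' hext)

variable {R φ v'}
variable (hext : ∀ w : R.H.V, φ.vMap w = v' → R.isExternal w)

lemma Hgood_ends_val (f : (Hgood R φ v' hext).E) :
    R.H.ends f.val = ((Hgood R φ v' hext).ends f).map Subtype.val := by
  show R.H.ends f.val = Sym2.map _ (Sym2.map _ (R.H.ends f.val))
  rw [Sym2.map_map]
  refine ((Sym2.map_congr fun a ha => ?_).trans (congrFun Sym2.map_id _)).symm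
  show (retrH R φ v' hext a).val = a
  rw [retrH, dif_pos (f.2 a ha)]

lemma Hgood_mem_ends {f : (Hgood R φ v' hext).E} {w : (Hgood R φ v' hext).V} :
    w ∈ (Hgood R φ v' hext).ends f ↔ w.val ∈ R.H.ends f.val := by
  constructor
  · intro h
    obtain ⟨a, ha, rfl⟩ := Sym2.mem_map.1 h
    have : (retrH R φ v' hext a).val = a := by rw [retrH, dif_pos (f.2 a ha)]
    rw [this]
    exact ha
  · intro h
    refine Sym2.mem_map.2 ⟨w.val, h, Subtype.ext ?_⟩
    show (retrH R φ v' hext w.val).val = w.val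
    rw [retrH, dif_pos w.2]

/-- Lift a walk of `H` avoiding the fiber over `v'` into `H'`. -/
noncomputable def liftH : ∀ {a b : R.H.V} (p : R.H.Walk a b) (ha : a ∈ goodSet R φ v')
    (hp : ∀ x ∈ p.support, φ.vMap x ≠ v'),
    (Hgood R φ v' hext).Walk ⟨a, ha⟩ ⟨b, goodSet.end_mem p ha hp⟩
  | _, _, .nil a, ha, _ =>
      Multigraph.Walk.nil (M := Hgood R φ v' hext)
        (show {w : R.H.V // w ∈ goodSet R φ v'} from ⟨a, ha⟩)
  | _, _, .cons (v := y) e he p, ha, hp =>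
      have hy : y ∈ goodSet R φ v' :=
        goodSet.extend ha e (he ▸ Sym2.mem_mk_left _ _) (he ▸ Sym2.mem_mk_right _ _)
          (hp _ (List.mem_cons_of_mem _ p.start_mem_support))
      have hfe : goodEdge R φ v' e := fun x hx => by
        rw [he, Sym2.mem_iff] at hx
        rcases hx with rfl | rfl
        · exact ha
        · exact hy
      Multigraph.Walk.cons (M := Hgood R φ v' hext)
        (show {f : R.H.E // goodEdge R φ v' f} from ⟨e, hfe⟩)
        (by
          show Sym2.map (retrH R φ v' hext) (R.H.ends e) = _
          rw [he, Sym2.map_pair_eq]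
          simp only [retrH, dif_pos ha, dif_pos hy]
          rfl)
        (liftH p hy fun x hx => hp x (List.mem_cons_of_mem _ hx))

lemma liftH_support_val : ∀ {a b : R.H.V} (p : R.H.Walk a b) (ha : a ∈ goodSet R φ v')
    (hp : ∀ x ∈ p.support, φ.vMap x ≠ v'),
    ((liftH hext p ha hp).support).map Subtype.val = p.support
  | _, _, .nil a, _, _ => by simp [liftH]; rfl
  | _, _, .cons e he p, ha, hp => by
      simp only [liftH, Multigraph.Walk.support_cons, List.map_cons]
      exact congrArg (List.cons _) (liftH_support_val _ _ _)

lemma liftH_edges_val : ∀ {a b : R.H.V} (p : R.H.Walk a b) (ha : a ∈ goodSet R φ v')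
    (hp : ∀ x ∈ p.support, φ.vMap x ≠ v'),
    ((liftH hext p ha hp).edges).map Subtype.val = p.edges
  | _, _, .nil a, _, _ => by simp [liftH]; rfl
  | _, _, .cons e he p, ha, hp => by
      simp only [liftH, Multigraph.Walk.edges_cons, List.map_cons]
      exact congrArg (List.cons e) (liftH_edges_val _ _ _)

end Main
section TreeSide

variable {T : Multigraph} {v' : T.V}

noncomputable def leafEdge (hleaf : T.IsLeaf v') : T.E := hleaf.choose

lemma leafEdge_mem (hleaf : T.IsLeaf v') : v' ∈ T.ends (leafEdge hleaf) :=
  hleaf.choose_spec.1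

lemma leafEdge_unique (hleaf : T.IsLeaf v') : ∀ e : T.E, v' ∈ T.ends e → e = leafEdge hleaf :=
  hleaf.choose_spec.2

noncomputable def leafOther (hleaf : T.IsLeaf v') : T.V :=
  (Sym2.mem_iff_exists.1 (leafEdge_mem hleaf)).choose

lemma leafEdge_ends (hleaf : T.IsLeaf v') :
    T.ends (leafEdge hleaf) = s(v', leafOther hleaf) :=
  (Sym2.mem_iff_exists.1 (leafEdge_mem hleaf)).choose_spec

lemma leafOther_ne (hT : T.IsTree) (hleaf : T.IsLeaf v') : leafOther hleaf ≠ v' :=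
  (hT.ne_of_ends (leafEdge_ends hleaf)).symm

open Classical in
noncomputable def retrT (hT : T.IsTree) (hleaf : T.IsLeaf v') (t : T.V) : {t : T.V // t ≠ v'} :=
  if h : t = v' then ⟨leafOther hleaf, leafOther_ne hT hleaf⟩ else ⟨t, h⟩

noncomputable def Tgood (hT : T.IsTree) (hleaf : T.IsLeaf v') : Multigraph where
  V := {t : T.V // t ≠ v'}
  E := {f : T.E // v' ∉ T.ends f}
  fintypeV := Fintype.ofFinite _
  fintypeE := Fintype.ofFinite _
  nonemptyV := ⟨⟨leafOther hleaf, leafOther_ne hT hleaf⟩⟩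
  ends := fun f => (T.ends f.val).map (retrT hT hleaf)

variable (hT : T.IsTree) (hleaf : T.IsLeaf v')

lemma Tgood_ends_val (f : (Tgood hT hleaf).E) :
    T.ends f.val = ((Tgood hT hleaf).ends f).map Subtype.val := by
  show T.ends f.val = Sym2.map _ (Sym2.map _ (T.ends f.val))
  rw [Sym2.map_map]
  refine ((Sym2.map_congr fun a ha => ?_).trans (congrFun Sym2.map_id _)).symm
  show (retrT hT hleaf a).val = a
  rw [retrT, dif_neg (fun (h : a = v') => f.2 (show v' ∈ T.ends f.val from h ▸ ha))]

lemma Tgood_mem_ends {f : (Tgood hT hleaf).E} {w : (Tgood hT hleaf).V} :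
    w ∈ (Tgood hT hleaf).ends f ↔ w.val ∈ T.ends f.val := by
  constructor
  · intro h
    obtain ⟨a, ha, rfl⟩ := Sym2.mem_map.1 h
    have : (retrT hT hleaf a).val = a := by rw [retrT, dif_neg (fun (h : a = v') => f.2 (show v' ∈ T.ends f.val from h ▸ ha))]
    rw [this]
    exact ha
  · intro h
    refine Sym2.mem_map.2 ⟨w.val, h, Subtype.ext ?_⟩
    show (retrT hT hleaf w.val).val = w.val
    rw [retrT, dif_neg w.2]

lemma Tgood_no_loop : ∀ (f : (Tgood hT hleaf).E) (x y : (Tgood hT hleaf).V),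
    (Tgood hT hleaf).ends f = s(x, y) → x ≠ y := by
  rintro f x y hf rfl
  apply hT.no_loop (e := f.val) (a := x.val)
  rw [Tgood_ends_val hT hleaf f, hf]
  exact Sym2.map_pair_eq _ _ _

lemma ne_of_avoid_start {a b : T.V} {p : T.Walk a b} (hp : v' ∉ p.support) : a ≠ v' :=
  fun h => hp (h ▸ p.start_mem_support)

lemma ne_of_avoid_end {a b : T.V} {p : T.Walk a b} (hp : v' ∉ p.support) : b ≠ v' :=
  fun h => hp (h ▸ p.end_mem_support)

noncomputable def liftT : ∀ {a b : T.V} (p : T.Walk a b) (hp : v' ∉ p.support),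
    (Tgood hT hleaf).Walk ⟨a, ne_of_avoid_start hp⟩ ⟨b, ne_of_avoid_end hp⟩
  | _, _, .nil a, hp =>
      Multigraph.Walk.nil (M := Tgood hT hleaf)
        (show {t : T.V // t ≠ v'} from ⟨a, ne_of_avoid_start hp⟩)
  | _, _, .cons (v := y) e he p, hp =>
      have hp' : v' ∉ p.support := fun h => hp (List.mem_cons_of_mem _ h)
      have ha : _ ≠ v' := ne_of_avoid_start hp
      have hy : y ≠ v' := ne_of_avoid_start hp'
      have hfe : v' ∉ T.ends e := by
        rw [he, Sym2.mem_iff]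
        rintro (h | h)
        · exact ha h.symm
        · exact hy h.symm
      Multigraph.Walk.cons (M := Tgood hT hleaf)
        (show {f : T.E // v' ∉ T.ends f} from ⟨e, hfe⟩)
        (by
          show Sym2.map (retrT hT hleaf) (T.ends e) = _
          rw [he, Sym2.map_pair_eq]
          simp only [retrT, dif_neg ha, dif_neg hy]
          rfl)
        (liftT p hp')

include hT hleaf in
lemma exists_avoid : ∀ (n : ℕ) {u w : T.V}, u ≠ v' → w ≠ v' →
    ∀ p : T.Walk u w, p.edges.length ≤ n → ∃ q : T.Walk u w, v' ∉ q.support := by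
  intro n
  induction n with
  | zero =>
      intro u w hu hw p hle
      cases p with
      | nil _ =>
          refine ⟨.nil _, ?_⟩
          simp only [Multigraph.Walk.support_nil, List.mem_singleton]
          exact fun h => hu h.symm
      | cons e he q => simp [Multigraph.Walk.edges] at hle
  | succ n ih =>
      intro u w hu hw p hle
      cases p with
      | nil _ =>
          refine ⟨.nil _, ?_⟩
          simp only [Multigraph.Walk.support_nil, List.mem_singleton]
          exact fun h => hu h.symm
      | cons e he q =>
          rename_i x
          by_cases hx : x = v'
          · subst hx
            -- e is the leaf edge, u = leafOther
            have he0 : e = leafEdge hleaf := leafEdge_unique hleaf e (he ▸ Sym2.mem_mk_right _ _)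
            have hu0 : u = leafOther hleaf := by
              have := (he0 ▸ he).symm.trans (leafEdge_ends hleaf)
              rcases Sym2.eq_iff.1 this with ⟨h1, _⟩ | ⟨h1, _⟩
              · exact absurd h1 hu
              · exact h1
            cases q with
            | nil _ => exact absurd rfl hw
            | cons e' he' q' =>
                rename_i z
                have he0' : e' = leafEdge hleaf :=
                  leafEdge_unique hleaf e' (he' ▸ Sym2.mem_mk_left _ _)
                have hz : z = leafOther hleaf := by
                  have := (he0' ▸ he').symm.trans (leafEdge_ends hleaf)
                  rcases Sym2.eq_iff.1 this with ⟨_, h2⟩ | ⟨h1, _⟩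
                  · exact h2
                  · exact absurd h1.symm (leafOther_ne hT hleaf)
                have hzu : z = u := hz.trans hu0.symm
                subst hzu
                refine ih hu hw q' ?_
                simp [Multigraph.Walk.edges] at hle ⊢
                omega
          · obtain ⟨q', hq'⟩ := ih hx hw q (by simp [Multigraph.Walk.edges] at hle ⊢; omega)
            refine ⟨.cons e he q', ?_⟩
            simp only [Multigraph.Walk.support_cons, List.mem_cons]
            rintro (h | h)
            · exact hu h.symm
            · exact hq' h

lemma Tgood_connected : (Tgood hT hleaf).Connected := by
  intro u w
  obtain ⟨p⟩ := hT.1 u.val w.val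
  obtain ⟨q, hq⟩ := exists_avoid hT hleaf p.edges.length u.2 w.2 p le_rfl
  exact ⟨liftT hT hleaf q hq⟩

lemma Tgood_isTree : (Tgood hT hleaf).IsTree := by
  refine ⟨Tgood_connected hT hleaf, ?_⟩
  classical
  have hV : Fintype.card (Tgood hT hleaf).V = Fintype.card T.V - 1 := by
    have h1 : Fintype.card (Tgood hT hleaf).V = Fintype.card {t : T.V // ¬(t = v')} :=
      Fintype.card_congr (Equiv.refl _)
    rw [h1, Fintype.card_subtype_compl, Fintype.card_subtype_eq]
  have hE : Fintype.card (Tgood hT hleaf).E = Fintype.card T.E - 1 := by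
    have h1 : Fintype.card (Tgood hT hleaf).E = Fintype.card {f : T.E // ¬(v' ∈ T.ends f)} :=
      Fintype.card_congr (Equiv.refl _)
    rw [h1, Fintype.card_subtype_compl]
    congr 1
    rw [Fintype.card_eq_one_iff]
    exact ⟨⟨leafEdge hleaf, leafEdge_mem hleaf⟩,
      fun y => Subtype.ext (leafEdge_unique hleaf y.1 y.2)⟩
  have hpos : 0 < Fintype.card T.E := Fintype.card_pos_iff.2 ⟨leafEdge hleaf⟩
  have := hT.2
  rw [hV, hE]
  omega

end TreeSide
lemma mem_list_val_iff {α : Type*} {p : α → Prop} {l : List {x // p x}} {a : {x // p x}} :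
    a ∈ l ↔ a.val ∈ l.map Subtype.val := by
  constructor
  · exact fun h => List.mem_map_of_mem h
  · intro h
    obtain ⟨b, hb, hba⟩ := List.mem_map.1 h
    exact (Subtype.ext hba : b = a) ▸ hb

section PhiSide

variable {G : Multigraph} {R : Refinement G} {T : Multigraph} {φ : Morphism R.H T} {v' : T.V}
variable (hext : ∀ w : R.H.V, φ.vMap w = v' → R.isExternal w)
variable (hT : T.IsTree) (hleaf : T.IsLeaf v')

lemma goodEdge_img (f : (Hgood R φ v' hext).E) : v' ∉ T.ends (φ.eMap f.val) := by
  intro h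
  rw [φ.ends_eq] at h
  obtain ⟨x, hx, hxv⟩ := Sym2.mem_map.1 h
  exact goodSet.ne_of_mem (f.2 x hx) hxv

/-- The restriction `φ' : H' → T'` of `φ`. -/
noncomputable def phiGood : Morphism (Hgood R φ v' hext) (Tgood hT hleaf) where
  vMap w := ⟨φ.vMap w.val, goodSet.ne_of_mem w.2⟩
  eMap f := ⟨φ.eMap f.val, goodEdge_img hext f⟩
  ends_eq f := by
    show Sym2.map (retrT hT hleaf) (T.ends (φ.eMap f.val)) = _
    rw [φ.ends_eq, Sym2.map_map]
    show _ = Sym2.map _ (Sym2.map (retrH R φ v' hext) (R.H.ends f.val))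
    erw [Sym2.map_map]
    apply Sym2.map_congr
    intro a ha
    have haS : a ∈ goodSet R φ v' := f.2 a ha
    simp only [Function.comp_apply]
    rw [retrT, dif_neg (goodSet.ne_of_mem haS)]
    exact Subtype.ext (by
      show φ.vMap a = φ.vMap (retrH R φ v' hext a).val
      rw [retrH, dif_pos haS])
  r f := φ.r f.val
  r_pos f := φ.r_pos f.val

open Classical in
lemma phiGood_localDeg (w : (Hgood R φ v' hext).V) (a : (Tgood hT hleaf).E) :
    (phiGood hext hT hleaf).localDeg w a = φ.localDeg w.val a.val := by
  unfold Morphism.localDeg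
  have step : ∀ f : (Hgood R φ v' hext).E,
      (if w ∈ (Hgood R φ v' hext).ends f ∧ (phiGood hext hT hleaf).eMap f = a
        then (phiGood hext hT hleaf).r f else 0)
      = (if w.val ∈ R.H.ends f.val ∧ φ.eMap f.val = a.val then φ.r f.val else 0) := by
    intro f
    refine if_congr (and_congr (Hgood_mem_ends hext) ?_) rfl rfl
    constructor
    · exact fun h => congrArg Subtype.val h
    · exact fun h => Subtype.ext h
  rw [Finset.sum_congr rfl fun f _ => step f]
  exact sum_ite_subtype (instQ := (Hgood R φ v' hext).fintypeE)
    (fun g => w.val ∈ R.H.ends g ∧ φ.eMap g = a.val) (goodEdge R φ v') _ φ.r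
    (by
      rintro g ⟨hw, hg⟩ x hx
      have hmem : φ.vMap x ∈ T.ends (φ.eMap g) := by
        rw [φ.ends_eq]
        exact Sym2.mem_map.2 ⟨x, hx, rfl⟩
      rw [hg] at hmem
      have hxv : φ.vMap x ≠ v' := fun hEq => a.2 (hEq ▸ hmem)
      exact goodSet.extend w.2 g hw hx hxv)

lemma phiGood_harmonic (hφ : φ.Harmonic) : (phiGood hext hT hleaf).Harmonic := by
  intro w a b ha hb
  rw [phiGood_localDeg, phiGood_localDeg]
  exact hφ w.val a.val b.val ((Tgood_mem_ends hT hleaf).1 ha) ((Tgood_mem_ends hT hleaf).1 hb)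

open Classical in
lemma phiGood_degreeOn_le {k : ℕ} (hdeg : φ.HasDegree k) (a : (Tgood hT hleaf).E) :
    (phiGood hext hT hleaf).degreeOn a ≤ k := by
  unfold Morphism.degreeOn
  have step : ∀ f : (Hgood R φ v' hext).E,
      (if (phiGood hext hT hleaf).eMap f = a then (phiGood hext hT hleaf).r f else 0)
      = (if φ.eMap f.val = a.val then φ.r f.val else 0) := by
    intro f
    refine if_congr ⟨fun h => congrArg Subtype.val h, fun h => Subtype.ext h⟩ rfl rfl
  rw [Finset.sum_congr rfl fun f _ => step f]
  calc ∑ f : (Hgood R φ v' hext).E, (if φ.eMap f.val = a.val then φ.r f.val else 0)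
      ≤ ∑ f : R.H.E, (if φ.eMap f = a.val then φ.r f else 0) :=
        sum_ite_subtype_le (instQ := (Hgood R φ v' hext).fintypeE)
          (fun g => φ.eMap g = a.val) (goodEdge R φ v') _ φ.r
    _ = k := hdeg a.val

lemma phiGood_hasDegree (hφ : φ.Harmonic) {k : ℕ} (hdeg : φ.HasDegree k) :
    ∃ d' : ℕ, (phiGood hext hT hleaf).HasDegree d' ∧ d' ≤ k := by
  by_cases hE : Nonempty (Tgood hT hleaf).E
  · have a₀ : (Tgood hT hleaf).E := Classical.arbitrary _
    refine ⟨(phiGood hext hT hleaf).degreeOn a₀, fun b =>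
      Morphism.degreeOn_const _ (phiGood_harmonic hext hT hleaf hφ)
        (Tgood_no_loop hT hleaf) (Tgood_connected hT hleaf) b a₀, ?_⟩
    exact phiGood_degreeOn_le hext hT hleaf hdeg a₀
  · exact ⟨0, fun e' => absurd ⟨e'⟩ hE, Nat.zero_le k⟩

include hext in
lemma base_walk_aux : ∀ {a b : G.V} (_ : G.Walk a b),
    ∃ q : R.H.Walk (R.vMap a) (R.vMap b), ∀ x ∈ q.support, φ.vMap x ≠ v' := by
  intro a b pg
  induction pg with
  | nil a =>
      refine ⟨.nil _, ?_⟩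
      simp only [Multigraph.Walk.support_nil, List.mem_singleton]
      rintro x rfl h
      exact R.external_not_orig a (hext _ h)
  | cons e he pg ih =>
      obtain ⟨q, hq⟩ := ih
      refine ⟨(R.subWalk _ _ _ he).append q, ?_⟩
      intro x hx
      rw [Multigraph.Walk.mem_support_append] at hx
      rcases hx with hx | hx
      · exact fun hEq => (R.subWalk_internal _ _ _ he x hx).1 (hext x hEq)
      · exact hq x hx

lemma Hgood_connected (hG : G.Connected) : (Hgood R φ v' hext).Connected := by
  intro w₁ w₂
  obtain ⟨g₁, p₁, hp₁⟩ := w₁.2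
  obtain ⟨g₂, p₂, hp₂⟩ := w₂.2
  obtain ⟨q, hq⟩ := base_walk_aux hext (hG g₁ g₂).some
  have hr : ∀ x ∈ (p₁.reverse.append (q.append p₂)).support, φ.vMap x ≠ v' := by
    intro x hx
    rw [Multigraph.Walk.mem_support_append] at hx
    rcases hx with hx | hx
    · exact hp₁ x ((Multigraph.Walk.mem_support_reverse p₁).1 hx)
    · rw [Multigraph.Walk.mem_support_append] at hx
      rcases hx with hx | hx
      · exact hq x hx
      · exact hp₂ x hx
  exact ⟨liftH hext (p₁.reverse.append (q.append p₂)) ⟨g₁, p₁, hp₁⟩ hr⟩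

/-- The refinement `H'` of `G`. -/
noncomputable def Rgood (hG : G.Connected) : Refinement G where
  H := Hgood R φ v' hext
  connH := Hgood_connected hext hG
  vMap g := ⟨R.vMap g, goodSet.base_mem hext g⟩
  vMap_inj := fun a b h => R.vMap_inj (congrArg Subtype.val h)
  edgeOrigin f := R.edgeOrigin f.val
  isExternal w := R.isExternal w.val
  external_not_orig g := R.external_not_orig g
  subWalk e u v he := liftH hext (R.subWalk e u v he) (goodSet.base_mem hext u)
    (fun x hx hEq => (R.subWalk_internal e u v he x hx).1 (hext x hEq))
  subWalk_edges_nodup e u v he := by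
    refine List.Nodup.of_map Subtype.val ?_
    rw [liftH_edges_val]
    exact R.subWalk_edges_nodup e u v he
  subWalk_edges_origin e u v he f := by
    erw [mem_list_val_iff, liftH_edges_val]
    exact R.subWalk_edges_origin e u v he f.val
  subWalk_path e u v he hne := by
    refine List.Nodup.of_map Subtype.val ?_
    rw [liftH_support_val]
    exact R.subWalk_path e u v he hne
  subWalk_cycle e u v he heq := by
    constructor
    · refine List.Nodup.of_map Subtype.val ?_
      erw [List.map_tail, liftH_support_val]
      exact (R.subWalk_cycle e u v he heq).1
    · intro h
      apply (R.subWalk_cycle e u v he heq).2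
      have := liftH_edges_val hext (R.subWalk e u v he) (goodSet.base_mem hext u)
        (fun x hx hEq => (R.subWalk_internal e u v he x hx).1 (hext x hEq))
      rw [h] at this
      exact this.symm
  subWalk_internal e u v he w hw := by
    erw [mem_list_val_iff, liftH_support_val] at hw
    obtain ⟨h1, h2⟩ := R.subWalk_internal e u v he w.val hw
    refine ⟨h1, fun x hx => ?_⟩
    rcases h2 x (congrArg Subtype.val hx) with h | h
    · exact Or.inl (Subtype.ext h)
    · exact Or.inr (Subtype.ext h)
  subWalk_disjoint e₁ u₁ v₁ he₁ e₂ u₂ v₂ he₂ w hne hw₁ hw₂ := by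
    erw [mem_list_val_iff, liftH_support_val] at hw₁ hw₂
    obtain ⟨x, hx⟩ := R.subWalk_disjoint e₁ u₁ v₁ he₁ e₂ u₂ v₂ he₂ w.val hne hw₁ hw₂
    exact ⟨x, Subtype.ext hx⟩
  vertex_cases w := by
    rcases R.vertex_cases w.val with ⟨x, hx⟩ | h | ⟨e, u, v, he, hw⟩
    · exact Or.inl ⟨x, Subtype.ext hx⟩
    · exact Or.inr (Or.inl h)
    · refine Or.inr (Or.inr ⟨e, u, v, he, ?_⟩)
      erw [mem_list_val_iff, liftH_support_val]
      exact hw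
  external_edge f hf := by
    obtain ⟨w, hw, hwe⟩ := R.external_edge f.val hf
    exact ⟨⟨w, f.2 w hw⟩, (Hgood_mem_ends hext).2 hw, hwe⟩
  external_incident f w hw hwf :=
    R.external_incident f.val w.val hw ((Hgood_mem_ends hext).1 hwf)
  added_acyclic x p hnd hor := by
    let κ : Morphism (Hgood R φ v' hext) R.H :=
      ⟨Subtype.val, Subtype.val, fun f => Hgood_ends_val hext f, fun _ => 1, fun _ => Nat.one_pos⟩
    have h := R.added_acyclic x.val (κ.walkMap p) ?_ ?_
    · rw [Morphism.walkMap_edges] at h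
      exact List.map_eq_nil_iff.1 h
    · rw [Morphism.walkMap_edges]
      exact hnd.map Subtype.val_injective
    · intro f hf
      rw [Morphism.walkMap_edges] at hf
      obtain ⟨b, hb, rfl⟩ := List.mem_map.1 hf
      exact hor b hb

end PhiSide
/-- **Lemma (removing a leaf of `T` all of whose preimages are external added vertices).**
If `φ : H → T` is a finite harmonic morphism of degree `sgon(G)` from a refinement `H` of `G`
to a tree `T`, and `v'` is a leaf of `T` such that every vertex of `H` mapped to `v'` is an
external added vertex, then there are a refinement `H'` of `G` and a finite harmonic morphism
`φ' : H' → T'` with `deg(φ') ≤ deg(φ)`, where `T'` is the tree `T \ {v'}` (embedded in `T`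
via `ιV, ιE`); moreover `H'` is (embedded via `κV, κE` as) the part of `H` obtained by
removing all vertices mapped to `v'` and keeping the connected component containing `G`,
and `φ'` is the restriction of `φ` (with the same indices). -/
theorem refinement_no_external_leaf
    (G : Multigraph) (hG : G.Connected) (k : ℕ) (hk : IsStableGonality G k)
    (R : Refinement G) (T : Multigraph) (hT : T.IsTree)
    (φ : Morphism R.H T) (hφ : φ.Harmonic) (hdeg : φ.HasDegree k)
    (v' : T.V) (hleaf : T.IsLeaf v')
    (hext : ∀ w : R.H.V, φ.vMap w = v' → R.isExternal w) :
    ∃ (T' : Multigraph) (_ : T'.IsTree) (ιV : T'.V → T.V) (ιE : T'.E → T.E),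
      Function.Injective ιV ∧ Function.Injective ιE ∧
      (∀ f : T'.E, T.ends (ιE f) = (T'.ends f).map ιV) ∧
      Set.range ιV = {w : T.V | w ≠ v'} ∧
      Set.range ιE = {f : T.E | v' ∉ T.ends f} ∧
      ∃ (R' : Refinement G) (φ' : Morphism R'.H T'),
        φ'.Harmonic ∧
        (∃ d' : ℕ, φ'.HasDegree d' ∧ d' ≤ k) ∧
        ∃ (κV : R'.H.V → R.H.V) (κE : R'.H.E → R.H.E),
          Function.Injective κV ∧ Function.Injective κE ∧
          (∀ f : R'.H.E, R.H.ends (κE f) = (R'.H.ends f).map κV) ∧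
          (∀ g : G.V, κV (R'.vMap g) = R.vMap g) ∧
          Set.range κV =
            {w : R.H.V | ∃ (g : G.V) (p : R.H.Walk (R.vMap g) w),
              ∀ x ∈ p.support, φ.vMap x ≠ v'} ∧
          (∀ w : R'.H.V, ιV (φ'.vMap w) = φ.vMap (κV w)) ∧
          (∀ f : R'.H.E, ιE (φ'.eMap f) = φ.eMap (κE f)) ∧
          (∀ f : R'.H.E, φ'.r f = φ.r (κE f)) := by
  refine ⟨Tgood hT hleaf, Tgood_isTree hT hleaf, Subtype.val, Subtype.val,
    Subtype.val_injective, Subtype.val_injective,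
    (fun f => Tgood_ends_val hT hleaf f), Subtype.range_coe_subtype, Subtype.range_coe_subtype,
    Rgood hext hG, phiGood hext hT hleaf,
    phiGood_harmonic hext hT hleaf hφ,
    phiGood_hasDegree hext hT hleaf hφ hdeg,
    Subtype.val, Subtype.val, Subtype.val_injective, Subtype.val_injective,
    (fun f => Hgood_ends_val hext f), (fun g => rfl),
    ?_, (fun w => rfl), (fun f => rfl), (fun f => rfl)⟩
  ext w
  constructor
  · rintro ⟨x, rfl⟩
    exact x.2
  · intro h
    exact ⟨⟨w, h⟩, rfl⟩
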